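/- Let y > 1 and γ > 0, and set δ = (y − 1)e^{−y}, σ = y²e^{−y}, x = (y − 1)/y. Then (x, y) is an equilibrium of the CSTR model with β = 0 (i.e., x = δy/σ and σ − δy = y·e^{−y}), it satisfies y = 1/(1 − x), and the Jacobian matrix J at this equilibrium is singular: det J = 0. -/

import Mathlib

/-- For `y > 1`, `γ > 0`, with `δ = (y−1)e^{−y}`, `σ = y²e^{−y}`,
`x = (y−1)/y`, the pair `(x, y)` is an equilibrium of the CSTR model with `β = 0`,
satisfies `y = 1/(1−x)`, and the Jacobian `J` there is singular. -/
theorem stmt_4 (y γ : ℝ) (hy : 1 < y) (hγ : 0 < γ) :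
    let δ := (y - 1) * Real.exp (-y)
    let σ := y ^ 2 * Real.exp (-y)
    let x := (y - 1) / y
    let J : Matrix (Fin 2) (Fin 2) ℝ :=
      !![-Real.exp y / x, Real.exp y * (1 - x);
         -Real.exp y / γ, -Real.exp y * (1 - x) * (1 - y) / (γ * y)]
    x = δ * y / σ ∧ σ - δ * y = y * Real.exp (-y) ∧ y = 1 / (1 - x) ∧ J.det = 0 := by
  intro δ σ x J
  have hy0 : (0:ℝ) < y := by linarith
  have hy1 : y - 1 ≠ 0 := sub_ne_zero.2 (ne_of_gt hy)
  have hyne : y ≠ 0 := ne_of_gt hy0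
  have hexp : Real.exp (-y) ≠ 0 := Real.exp_ne_zero _
  have hx : x = (y - 1) / y := rfl
  refine ⟨?_, ?_, ?_, ?_⟩
  · show x = δ * y / σ
    rw [hx]; unfold δ σ
    field_simp
  · show σ - δ * y = y * Real.exp (-y)
    unfold δ σ
    ring
  · show y = 1 / (1 - x)
    rw [hx]
    field_simp
    ring
  · show J.det = 0
    have : J.det = -Real.exp y / x * (-Real.exp y * (1 - x) * (1 - y) / (γ * y)) -
        Real.exp y * (1 - x) * (-Real.exp y / γ) := by
      simp [J, Matrix.det_fin_two_of]
    rw [this, hx]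
    have hγne : γ ≠ 0 := ne_of_gt hγ
    field_simp
    ring
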